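/- Let φ be a C¹ orientation-preserving diffeomorphism of the circle 𝕊¹ and σ ∈ (0,1). Then for every w ∈ H^σ(𝕊¹), ‖w∘φ‖_{H^σ} ≤ (‖1/φ_x‖_{L^∞}^{1/2} + ‖1/φ_x‖_{L^∞} ‖φ_x‖_{L^∞}^{(1+2σ)/2}) ‖w‖_{H^σ}. -/

import Mathlib

open MeasureTheory ENNReal

/-- The squared `L²` norm on the circle `ℝ/ℤ` (valued in `ℝ≥0∞`). -/
noncomputable def L2Sq (w : AddCircle (1 : ℝ) → ℂ) : ℝ≥0∞ :=
  ∫⁻ x, (‖w x‖₊ : ℝ≥0∞) ^ 2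

/-- The squared Gagliardo seminorm
`𝔭_σ(w)² = ∬ |w(x)−w(y)|² / |x−y|^{1+2σ} dx dy` on the circle (valued in `ℝ≥0∞`). -/
noncomputable def gagliardoSq (σ : ℝ) (w : AddCircle (1 : ℝ) → ℂ) : ℝ≥0∞ :=
  ∫⁻ x, ∫⁻ y, (‖w x - w y‖₊ : ℝ≥0∞) ^ 2 / edist x y ^ (1 + 2 * σ)

/-- The squared `H^σ` norm `‖w‖² = ‖w‖_{L²}² + 𝔭_σ(w)²`. -/
noncomputable def HsigmaSq (σ : ℝ) (w : AddCircle (1 : ℝ) → ℂ) : ℝ≥0∞ :=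
  L2Sq w + gagliardoSq σ w

/-- `round` minimizes the distance to integers. -/
lemma round_min (x : ℝ) (k : ℤ) : |x - round x| ≤ |x - k| := by
  rcases eq_or_ne k (round x) with rfl | h
  · rfl
  · have h1 : (1 : ℝ) ≤ |(round x : ℝ) - k| := by
      have h2 : (1 : ℤ) ≤ |round x - k| := Int.one_le_abs (sub_ne_zero.mpr (Ne.symm h))
      calc (1:ℝ) = ((1:ℤ) : ℝ) := by norm_num
        _ ≤ ((|round x - k| : ℤ) : ℝ) := by exact_mod_cast h2
        _ = |(round x : ℝ) - k| := by push_cast; ring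
    have h2 := abs_sub_round x
    have h3 : |(round x : ℝ) - k| ≤ |(round x : ℝ) - x| + |x - k| := by
      have := abs_sub_abs_le_abs_sub ((round x : ℝ) - k) ((round x : ℝ) - x)
      calc |(round x : ℝ) - k| = |((round x : ℝ) - x) + (x - k)| := by ring_nf
        _ ≤ |(round x : ℝ) - x| + |x - k| := abs_add_le _ _
    have h4 : |(round x : ℝ) - x| = |x - round x| := abs_sub_comm _ _
    linarith

lemma circle_norm (z : ℝ) : ‖(z : AddCircle (1:ℝ))‖ = |z - round z| := by
  rw [AddCircle.norm_eq]; norm_num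

/-- `1/2`-power in `ℝ≥0∞` division bound. -/
lemma div_le_aux {a d d' C : ℝ≥0∞} (hC0 : C ≠ 0) (hCt : C ≠ ⊤) (h : d' ≤ C * d) :
    a / d ≤ C * (a / d') := by
  rcases eq_or_ne a 0 with rfl | ha
  · simp
  rcases eq_or_ne d' 0 with rfl | hd'
  · rw [ENNReal.div_zero ha, ENNReal.mul_top hC0]; exact le_top
  have h2 : (C * d'⁻¹)⁻¹ ≤ d := by
    rw [ENNReal.mul_inv (Or.inl hC0) (Or.inl hCt), inv_inv]
    calc C⁻¹ * d' ≤ C⁻¹ * (C * d) := mul_le_mul_right h _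
      _ = d := by rw [← mul_assoc, ENNReal.inv_mul_cancel hC0 hCt, one_mul]
  have hinv : d⁻¹ ≤ C * d'⁻¹ := by
    have := ENNReal.inv_le_inv.mpr h2
    rwa [inv_inv] at this
  calc a / d = a * d⁻¹ := by rw [div_eq_mul_inv]
    _ ≤ a * (C * d'⁻¹) := mul_le_mul_right hinv a
    _ = C * (a * d'⁻¹) := by ring
    _ = C * (a / d') := by rw [div_eq_mul_inv]

section Aux

variable (Φ Φ' : ℝ → ℝ)

lemma per_int (hper : ∀ x, Φ (x + 1) = Φ x + 1) :
    ∀ (k : ℤ) (x : ℝ), Φ (x + k) = Φ x + k := by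
  intro k
  induction k using Int.induction_on with
  | zero => simp
  | succ n ih =>
    intro x
    have h1 : (x : ℝ) + ((n : ℤ) + 1 : ℤ) = (x + (n : ℤ)) + 1 := by push_cast; ring
    rw [h1, hper, ih]; push_cast; ring
  | pred n ih =>
    intro x
    have h1 : (x : ℝ) + ((-(n : ℤ) - 1 : ℤ) : ℝ) + 1 = x + ((-(n : ℤ) : ℤ) : ℝ) := by
      push_cast; ring
    have h2 := hper (x + ((-(n : ℤ) - 1 : ℤ) : ℝ))
    rw [h1, ih] at h2
    push_cast at h2 ⊢
    linarith

/-- Key change of variables inequality on the circle. -/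
lemma key_change (hΦ : ∀ x, HasDerivAt Φ (Φ' x) x) (hpos : ∀ x, 0 < Φ' x)
    (hper : ∀ x, Φ (x + 1) = Φ x + 1) (A : ℝ) (hA : ∀ x, (Φ' x)⁻¹ ≤ A)
    (f F : AddCircle (1 : ℝ) → ℝ≥0∞) (hF : ∀ u : ℝ, F u = f ((Φ u : ℝ) : AddCircle (1:ℝ))) :
    ∫⁻ x, F x ≤ ENNReal.ofReal A * ∫⁻ x, f x := by
  haveI : Fact ((0:ℝ) < 1) := ⟨one_pos⟩
  have hA0 : 0 < A := lt_of_lt_of_le (inv_pos.mpr (hpos 0)) (hA 0)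
  have hmono : StrictMono Φ := strictMono_of_hasDerivAt_pos hΦ hpos
  have hcont : Continuous Φ := continuous_iff_continuousAt.mpr fun x => (hΦ x).continuousAt
  have himg : Φ '' Set.Ioc 0 1 = Set.Ioc (Φ 0) (Φ 0 + 1) := by
    have h1 : Φ 1 = Φ 0 + 1 := by simpa using hper 0
    rw [← h1]
    apply Set.Subset.antisymm
    · rintro _ ⟨x, hx, rfl⟩; exact ⟨hmono hx.1, hmono.monotone hx.2⟩
    · exact intermediate_value_Ioc zero_le_one hcont.continuousOn
  have himage :
      (∫⁻ y in Φ '' Set.Ioc 0 1, f ((y : ℝ) : AddCircle (1:ℝ)))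
        = ∫⁻ u in Set.Ioc (0:ℝ) 1,
            ENNReal.ofReal |Φ' u| * f ((Φ u : ℝ) : AddCircle (1:ℝ)) := by
    have := lintegral_image_eq_lintegral_abs_det_fderiv_mul volume (s := Set.Ioc (0:ℝ) 1)
      measurableSet_Ioc (f' := fun x => (1 : ℝ →L[ℝ] ℝ).smulRight (Φ' x))
      (fun x _ => (hΦ x).hasFDerivAt.hasFDerivWithinAt)
      (hmono.injective.injOn) (fun y => f ((y : ℝ) : AddCircle (1:ℝ)))
    simpa only [ContinuousLinearMap.smulRight_one_eq_toSpanSingleton, ContinuousLinearMap.det_toSpanSingleton] using this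
  calc ∫⁻ x, F x = ∫⁻ u in Set.Ioc (0:ℝ) (0 + 1), F u := (AddCircle.lintegral_preimage 1 0 F).symm
    _ = ∫⁻ u in Set.Ioc (0:ℝ) 1, f ((Φ u : ℝ) : AddCircle (1:ℝ)) := by
        rw [zero_add]; exact lintegral_congr fun u => hF u
    _ ≤ ∫⁻ u in Set.Ioc (0:ℝ) 1,
          ENNReal.ofReal A * (ENNReal.ofReal |Φ' u| * f ((Φ u : ℝ) : AddCircle (1:ℝ))) := by
        refine lintegral_mono fun u => ?_
        have h1 : (1 : ℝ≥0∞) ≤ ENNReal.ofReal A * ENNReal.ofReal |Φ' u| := by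
          rw [← ENNReal.ofReal_mul hA0.le, ← ENNReal.ofReal_one]
          apply ENNReal.ofReal_le_ofReal
          rw [abs_of_pos (hpos u)]
          have h2 := mul_le_mul_of_nonneg_right (hA u) (hpos u).le
          rwa [inv_mul_cancel₀ (hpos u).ne'] at h2
        calc f ((Φ u : ℝ) : AddCircle (1:ℝ)) = 1 * f ((Φ u : ℝ) : AddCircle (1:ℝ)) :=
              (one_mul _).symm
          _ ≤ (ENNReal.ofReal A * ENNReal.ofReal |Φ' u|) * f ((Φ u : ℝ) : AddCircle (1:ℝ)) :=
              mul_le_mul_left h1 _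
          _ = _ := mul_assoc _ _ _
    _ = ENNReal.ofReal A * ∫⁻ u in Set.Ioc (0:ℝ) 1,
          ENNReal.ofReal |Φ' u| * f ((Φ u : ℝ) : AddCircle (1:ℝ)) :=
        lintegral_const_mul' _ _ ENNReal.ofReal_ne_top
    _ = ENNReal.ofReal A * ∫⁻ y in Φ '' Set.Ioc 0 1, f ((y : ℝ) : AddCircle (1:ℝ)) := by
        rw [himage]
    _ = ENNReal.ofReal A * ∫⁻ y in Set.Ioc (Φ 0) (Φ 0 + 1), f ((y : ℝ) : AddCircle (1:ℝ)) := by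
        rw [himg]
    _ = ENNReal.ofReal A * ∫⁻ x, f x := by
        rw [AddCircle.lintegral_preimage 1 (Φ 0) f]

/-- Distance bound on the circle. -/
lemma edist_bound (hΦ : ∀ x, HasDerivAt Φ (Φ' x) x) (hpos : ∀ x, 0 < Φ' x)
    (hper : ∀ x, Φ (x + 1) = Φ x + 1) (B : ℝ) (hB : ∀ x, Φ' x ≤ B) (u v : ℝ) :
    edist ((Φ u : ℝ) : AddCircle (1:ℝ)) ((Φ v : ℝ) : AddCircle (1:ℝ))
      ≤ ENNReal.ofReal B * edist ((u : ℝ) : AddCircle (1:ℝ)) ((v : ℝ) : AddCircle (1:ℝ)) := by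
  have hB0 : (0:ℝ) ≤ B := le_trans (hpos 0).le (hB 0)
  have hlip : ∀ a b : ℝ, |Φ a - Φ b| ≤ B * |a - b| := by
    intro a b
    have := Convex.norm_image_sub_le_of_norm_hasDerivWithin_le (f := Φ) (f' := Φ')
      (s := Set.univ) (fun x _ => (hΦ x).hasDerivWithinAt)
      (fun x _ => by rw [Real.norm_eq_abs, abs_of_pos (hpos x)]; exact hB x)
      convex_univ (Set.mem_univ b) (Set.mem_univ a)
    simpa [Real.norm_eq_abs] using this
  rw [edist_dist, edist_dist, ← ENNReal.ofReal_mul hB0]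
  apply ENNReal.ofReal_le_ofReal
  have hd1 : dist ((u : ℝ) : AddCircle (1:ℝ)) ((v : ℝ) : AddCircle (1:ℝ))
      = |u - v - round (u - v)| := by
    rw [dist_eq_norm, ← AddCircle.coe_sub, circle_norm]
  have hd2 : dist ((Φ u : ℝ) : AddCircle (1:ℝ)) ((Φ v : ℝ) : AddCircle (1:ℝ))
      = |Φ u - Φ v - round (Φ u - Φ v)| := by
    rw [dist_eq_norm, ← AddCircle.coe_sub, circle_norm]
  rw [hd1, hd2]
  set k : ℤ := round (u - v) with hk
  calc |Φ u - Φ v - round (Φ u - Φ v)| ≤ |Φ u - Φ v - k| := round_min _ _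
    _ = |Φ u - Φ (v + k)| := by rw [per_int Φ hper k v]; ring_nf
    _ ≤ B * |u - (v + k)| := hlip u (v + k)
    _ = B * |u - v - k| := by ring_nf

end Aux

/-- Let `φ` be a `C¹` orientation-preserving diffeomorphism of the
circle `ℝ/ℤ`, given by a lift `Φ : ℝ → ℝ` with `Φ(x+1) = Φ(x)+1`, `Φ' > 0` continuous,
`1/Φ' ≤ A` and `Φ' ≤ B` (so `A = ‖1/φ_x‖_{L^∞}`, `B = ‖φ_x‖_{L^∞}` bound the norms).
Then for `σ ∈ (0,1)` and every `w ∈ H^σ(𝕊¹)`,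
`‖w∘φ‖_{H^σ} ≤ (A^{1/2} + A B^{(1+2σ)/2}) ‖w‖_{H^σ}`. -/
theorem stmt15 (σ : ℝ) (hσ0 : 0 < σ) (hσ1 : σ < 1)
    (Φ Φ' : ℝ → ℝ) (hΦ : ∀ x, HasDerivAt Φ (Φ' x) x) (hΦ'c : Continuous Φ')
    (hper : ∀ x, Φ (x + 1) = Φ x + 1) (hpos : ∀ x, 0 < Φ' x)
    (A B : ℝ) (hA : ∀ x, (Φ' x)⁻¹ ≤ A) (hB : ∀ x, Φ' x ≤ B)
    (φ : AddCircle (1 : ℝ) → AddCircle (1 : ℝ)) (hφ : ∀ x : ℝ, φ x = (Φ x : ℝ))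
    (w : AddCircle (1 : ℝ) → ℂ) (hw : Measurable w) :
    HsigmaSq σ (w ∘ φ) ^ (1 / 2 : ℝ)
      ≤ ENNReal.ofReal (A ^ (1 / 2 : ℝ) + A * B ^ ((1 + 2 * σ) / 2))
          * HsigmaSq σ w ^ (1 / 2 : ℝ) := by
  set s : ℝ := 1 + 2 * σ with hs
  have hs0 : (0:ℝ) < s := by positivity
  have hA0 : 0 < A := lt_of_lt_of_le (inv_pos.mpr (hpos 0)) (hA 0)
  have hB0 : 0 < B := lt_of_lt_of_le (hpos 0) (hB 0)
  set C1 : ℝ≥0∞ := ENNReal.ofReal A with hC1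
  set C : ℝ≥0∞ := (ENNReal.ofReal B) ^ s with hC
  have hCne0 : C ≠ 0 := (ENNReal.rpow_pos (ENNReal.ofReal_pos.mpr hB0) ENNReal.ofReal_ne_top).ne'
  have hCnetop : C ≠ ⊤ := ENNReal.rpow_ne_top_of_nonneg hs0.le ENNReal.ofReal_ne_top
  -- L² bound
  have hL2 : L2Sq (w ∘ φ) ≤ C1 * L2Sq w := by
    exact key_change Φ Φ' hΦ hpos hper A hA (fun x => (‖w x‖₊ : ℝ≥0∞) ^ 2)
      (fun x => (‖(w ∘ φ) x‖₊ : ℝ≥0∞) ^ 2) (fun u => by simp [hφ u])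
  -- Gagliardo bound
  set g : AddCircle (1:ℝ) → AddCircle (1:ℝ) → ℝ≥0∞ :=
    fun p q => (‖w p - w q‖₊ : ℝ≥0∞) ^ 2 / edist p q ^ s with hg
  have hpt : ∀ p q : AddCircle (1:ℝ),
      (‖w (φ p) - w (φ q)‖₊ : ℝ≥0∞) ^ 2 / edist p q ^ s ≤ C * g (φ p) (φ q) := by
    intro p q
    induction p using QuotientAddGroup.induction_on with | H u => ?_
    induction q using QuotientAddGroup.induction_on with | H v => ?_
    rw [hφ u, hφ v]
    have hd : edist ((Φ u : ℝ) : AddCircle (1:ℝ)) ((Φ v : ℝ) : AddCircle (1:ℝ)) ^ s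
        ≤ C * edist ((u : ℝ) : AddCircle (1:ℝ)) ((v : ℝ) : AddCircle (1:ℝ)) ^ s := by
      calc edist ((Φ u : ℝ) : AddCircle (1:ℝ)) ((Φ v : ℝ) : AddCircle (1:ℝ)) ^ s
          ≤ (ENNReal.ofReal B *
              edist ((u : ℝ) : AddCircle (1:ℝ)) ((v : ℝ) : AddCircle (1:ℝ))) ^ s :=
            ENNReal.rpow_le_rpow (edist_bound Φ Φ' hΦ hpos hper B hB u v) hs0.le
        _ = C * edist ((u : ℝ) : AddCircle (1:ℝ)) ((v : ℝ) : AddCircle (1:ℝ)) ^ s := by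
            rw [ENNReal.mul_rpow_of_nonneg _ _ hs0.le]
    exact div_le_aux hCne0 hCnetop hd
  have hG : gagliardoSq σ (w ∘ φ) ≤ C * (C1 * (C1 * gagliardoSq σ w)) := by
    have step1 : gagliardoSq σ (w ∘ φ) ≤ C * ∫⁻ p, ∫⁻ q, g (φ p) (φ q) := by
      calc gagliardoSq σ (w ∘ φ)
          = ∫⁻ p, ∫⁻ q, (‖w (φ p) - w (φ q)‖₊ : ℝ≥0∞) ^ 2 / edist p q ^ s := rfl
        _ ≤ ∫⁻ p, ∫⁻ q, C * g (φ p) (φ q) :=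
            lintegral_mono fun p => lintegral_mono fun q => hpt p q
        _ = C * ∫⁻ p, ∫⁻ q, g (φ p) (φ q) := by
            rw [← lintegral_const_mul' _ _ hCnetop]
            exact lintegral_congr fun p => lintegral_const_mul' _ _ hCnetop
    have step2 : (∫⁻ p, ∫⁻ q, g (φ p) (φ q)) ≤ C1 * (C1 * gagliardoSq σ w) := by
      have hin : ∀ p : AddCircle (1:ℝ),
          (∫⁻ q, g (φ p) (φ q)) ≤ C1 * ∫⁻ q, g (φ p) q := fun p =>
        key_change Φ Φ' hΦ hpos hper A hA (fun q => g (φ p) q)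
          (fun q => g (φ p) (φ q)) (fun u => by simp only [hφ])
      calc (∫⁻ p, ∫⁻ q, g (φ p) (φ q)) ≤ ∫⁻ p, C1 * ∫⁻ q, g (φ p) q :=
            lintegral_mono fun p => hin p
        _ = C1 * ∫⁻ p, ∫⁻ q, g (φ p) q := lintegral_const_mul' _ _ ENNReal.ofReal_ne_top
        _ ≤ C1 * (C1 * ∫⁻ p, ∫⁻ q, g p q) := by
            refine mul_le_mul_right ?_ _
            exact key_change Φ Φ' hΦ hpos hper A hA (fun p => ∫⁻ q, g p q)
              (fun p => ∫⁻ q, g (φ p) q) (fun u => by simp only [hφ])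
        _ = C1 * (C1 * gagliardoSq σ w) := rfl
    calc gagliardoSq σ (w ∘ φ) ≤ C * ∫⁻ p, ∫⁻ q, g (φ p) (φ q) := step1
      _ ≤ C * (C1 * (C1 * gagliardoSq σ w)) := mul_le_mul_right step2 _
  set C2 : ℝ≥0∞ := C * (C1 * C1) with hC2
  have hG' : gagliardoSq σ (w ∘ φ) ≤ C2 * gagliardoSq σ w := by
    refine hG.trans (le_of_eq ?_); rw [hC2]; ring
  have hHs : HsigmaSq σ (w ∘ φ) ≤ max C1 C2 * HsigmaSq σ w := by
    unfold HsigmaSq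
    rw [mul_add]
    exact add_le_add (hL2.trans (mul_le_mul_left (le_max_left _ _) _))
      (hG'.trans (mul_le_mul_left (le_max_right _ _) _))
  have hmax : (max C1 C2) ^ (1/2 : ℝ) ≤ ENNReal.ofReal (A ^ (1/2:ℝ) + A * B ^ ((1 + 2*σ)/2)) := by
    have hmapmax : (max C1 C2) ^ (1/2 : ℝ)
        = max (C1 ^ (1/2 : ℝ)) (C2 ^ (1/2 : ℝ)) :=
      Monotone.map_max (f := fun x : ℝ≥0∞ => x ^ (1/2 : ℝ))
        (fun _ _ h => ENNReal.rpow_le_rpow h (by norm_num))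
    rw [hmapmax]
    apply max_le
    · rw [hC1, ENNReal.ofReal_rpow_of_pos hA0]
      exact ENNReal.ofReal_le_ofReal (le_add_of_nonneg_right (by positivity))
    · have hC2eq : C2 = ENNReal.ofReal (B ^ s * (A * A)) := by
        rw [hC2, hC, hC1, ENNReal.ofReal_rpow_of_pos hB0, ← ENNReal.ofReal_mul hA0.le,
          ← ENNReal.ofReal_mul (by positivity)]
      rw [hC2eq, ENNReal.ofReal_rpow_of_pos (by positivity)]
      apply ENNReal.ofReal_le_ofReal
      have h1 : (B ^ s) ^ (1/2 : ℝ) = B ^ ((1 + 2*σ)/2) := by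
        rw [← Real.rpow_mul hB0.le]; congr 1; rw [hs]; ring
      have h2 : (A * A) ^ (1/2 : ℝ) = A := by
        have h3 : A * A = A ^ ((2:ℕ) : ℝ) := by rw [Real.rpow_natCast]; ring
        rw [h3, ← Real.rpow_mul hA0.le]; norm_num
      have hre : (B ^ s * (A * A)) ^ (1/2 : ℝ) = A * B ^ ((1 + 2*σ)/2) := by
        rw [Real.mul_rpow (by positivity) (by positivity), h1, h2]; ring
      rw [hre]
      exact le_add_of_nonneg_left (by positivity)
  calc HsigmaSq σ (w ∘ φ) ^ (1/2 : ℝ)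
      ≤ (max C1 C2 * HsigmaSq σ w) ^ (1/2 : ℝ) := ENNReal.rpow_le_rpow hHs (by norm_num)
    _ = (max C1 C2) ^ (1/2 : ℝ) * HsigmaSq σ w ^ (1/2 : ℝ) :=
        ENNReal.mul_rpow_of_nonneg _ _ (by norm_num)
    _ ≤ ENNReal.ofReal (A ^ (1/2:ℝ) + A * B ^ ((1 + 2*σ)/2)) * HsigmaSq σ w ^ (1/2 : ℝ) :=
        mul_le_mul_left hmax _
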